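/- Let D be a directed graph with distinguished vertices s, t, with no edges into s and no edges out of t, and with |V(D) \ {s,t}| = n. Let P₁, ..., P_{n+1} be directed s–t paths in D. Then there exists a directed s–t path in D each of whose edges can be injectively assigned to distinct indices i with the edge belonging to Pᵢ (a rainbow s–t path). -/

import Mathlib

/-- The list of (directed) edges of a path given as a list of vertices. -/
def pathEdges {V : Type*} (l : List V) : List (V × V) := l.zip l.tail

/-- `l` is a directed `s`–`t` path in the digraph `D`: a list of distinct
vertices starting at `s`, ending at `t`, with consecutive vertices joined by
edges of `D`. -/
def IsSTPath {V : Type*} (D : V → V → Prop) (s t : V) (l : List V) : Prop :=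
  l.Chain' D ∧ l.head? = some s ∧ l.getLast? = some t ∧ l.Nodup

section Helpers

variable {V W : Type*}

lemma pathEdges_nil : pathEdges ([] : List V) = [] := rfl

lemma pathEdges_singleton (x : V) : pathEdges [x] = [] := rfl

lemma pathEdges_cons_cons (x y : V) (l : List V) :
    pathEdges (x :: y :: l) = (x, y) :: pathEdges (y :: l) := rfl

lemma mem_of_mem_pathEdges {e : V × V} {l : List V} (h : e ∈ pathEdges l) :
    e.1 ∈ l ∧ e.2 ∈ l.tail := by
  obtain ⟨a, b⟩ := e; exact List.of_mem_zip h

lemma chain'_iff_pathEdges (D : V → V → Prop) :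
    ∀ l : List V, l.Chain' D ↔ ∀ e ∈ pathEdges l, D e.1 e.2
  | [] => by simp [pathEdges_nil]; exact List.isChain_nil
  | [x] => by simp [pathEdges_singleton]; exact List.isChain_singleton x
  | x :: y :: l => by
      show List.IsChain D (x :: y :: l) ↔ _
      rw [List.isChain_cons_cons, pathEdges_cons_cons,
        show List.IsChain D (y :: l) ↔ _ from chain'_iff_pathEdges D (y :: l)]
      simp

lemma pathEdges_suffix_cons (x : V) (l : List V) :
    pathEdges l <:+ pathEdges (x :: l) := by
  cases l with
  | nil => simp [pathEdges_nil, pathEdges_singleton]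
  | cons y T => exact ⟨[(x, y)], rfl⟩

lemma List.IsSuffix.pathEdges' {l₁ l₂ : List V} (h : l₁ <:+ l₂) :
    pathEdges l₁ <:+ pathEdges l₂ := by
  obtain ⟨a, rfl⟩ := h
  induction a with
  | nil => exact List.suffix_refl _
  | cons x a ih => exact ih.trans (pathEdges_suffix_cons x _)

lemma pathEdges_map (f : V → W) (l : List V) :
    pathEdges (l.map f) = (pathEdges l).map (Prod.map f f) := by
  unfold pathEdges
  rw [← List.map_tail, List.zip_map]

lemma List.IsSuffix.getLast?_eq {l₁ l₂ : List V} (h : l₁ <:+ l₂) (h1 : l₁ ≠ []) :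
    l₂.getLast? = l₁.getLast? := by
  obtain ⟨a, rfl⟩ := h
  rw [List.getLast?_append]
  cases h2 : l₁.getLast? with
  | none => exact absurd (List.getLast?_eq_none_iff.mp h2) h1
  | some v => rfl

lemma mem_of_getLast?_eq {l : List V} {a : V} (h : l.getLast? = some a) : a ∈ l := by
  have h' : a ∈ l.getLast? := by rw [h]; rfl
  obtain ⟨hne, rfl⟩ := List.mem_getLast?_eq_getLast h'
  exact List.getLast_mem hne

lemma pathEdges_cons_elim {x : V} {l : List V} {e : V × V} (h : e ∈ pathEdges (x :: l)) :
    e ∈ pathEdges l ∨ ∃ y T, l = y :: T ∧ e = (x, y) := by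
  cases l with
  | nil => simp [pathEdges_singleton] at h
  | cons y T =>
      rw [pathEdges_cons_cons, List.mem_cons] at h
      rcases h with h | h
      · exact Or.inr ⟨y, T, rfl, h⟩
      · exact Or.inl h

lemma exists_cons_of_head?_eq {l : List V} {s : V} (h : l.head? = some s) :
    ∃ T, l = s :: T := by
  cases l with
  | nil => simp at h
  | cons a T =>
      simp only [List.head?_cons, Option.some.injEq] at h
      exact ⟨T, by rw [h]⟩

/-- The map collapsing `s` onto `u`, viewed as taking values in the subtype of
vertices different from `s`. -/
def embAux [DecidableEq V] {u s : V} (hu : u ≠ s) (v : V) : {x : V // x ≠ s} :=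
  if h : v = s then ⟨u, hu⟩ else ⟨v, h⟩

lemma embAux_self [DecidableEq V] {u s : V} (hu : u ≠ s) : embAux hu s = ⟨u, hu⟩ :=
  dif_pos rfl

lemma embAux_of_ne [DecidableEq V] {u s : V} (hu : u ≠ s) {v : V} (h : v ≠ s) :
    embAux hu v = ⟨v, h⟩ :=
  dif_neg h

lemma embAux_coe [DecidableEq V] {u s : V} (hu : u ≠ s) (x : {v : V // v ≠ s}) :
    embAux hu x.1 = x := by
  rw [embAux_of_ne hu x.2]

/-- A trivial rainbow path when `s = t`. -/
lemma rainbow_trivial {V : Type*} (D : V → V → Prop) {s t : V} (h : s = t) (m : ℕ)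
    (P : Fin (m + 1) → List V) :
    ∃ Q : List V, IsSTPath D s t Q ∧ ∃ c : V × V → Fin (m + 1),
      Set.InjOn c {e | e ∈ pathEdges Q} ∧ ∀ e ∈ pathEdges Q, e ∈ pathEdges (P (c e)) := by
  refine ⟨[s], ⟨List.isChain_singleton s, rfl, by simp [h], List.nodup_singleton s⟩,
    fun _ => 0, ?_, ?_⟩
  · intro a ha
    simp [pathEdges_singleton] at ha
  · intro e he
    simp [pathEdges_singleton] at he

end Helpers

theorem rainbow_aux : ∀ (n : ℕ) {V : Type*} [Fintype V] (D : V → V → Prop) (s t : V),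
    ({v : V | v ≠ s ∧ v ≠ t}).ncard = n →
    ∀ (P : Fin (n + 1) → List V), (∀ i, IsSTPath D s t (P i)) →
    ∃ Q : List V, IsSTPath D s t Q ∧
      ∃ c : V × V → Fin (n + 1),
        Set.InjOn c {e | e ∈ pathEdges Q} ∧
        ∀ e ∈ pathEdges Q, e ∈ pathEdges (P (c e)) := by
  intro n
  induction n with
  | zero =>
      intro V _ D s t hn P hP
      by_cases hst : s = t
      · exact rainbow_trivial D hst 0 P
      -- the inner vertex set is empty, so every vertex is s or t
      have hall : ∀ v : V, v = s ∨ v = t := by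
        intro v
        have := Set.ncard_eq_zero (Set.toFinite _) |>.mp hn
        by_contra hc
        push_neg at hc
        have : v ∈ ({v : V | v ≠ s ∧ v ≠ t} : Set V) := hc
        rw [Set.ncard_eq_zero (Set.toFinite _) |>.mp hn] at this
        exact this
      obtain ⟨hc0, hh0, hl0, hn0⟩ := hP 0
      obtain ⟨T, hT⟩ := exists_cons_of_head?_eq hh0
      -- T is nonempty
      cases T with
      | nil =>
          rw [hT] at hl0
          rw [List.getLast?_singleton] at hl0
          exact absurd (Option.some.injEq _ _ ▸ hl0) (by simpa using hst)
      | cons v T' =>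
          have hvs : v ≠ s := by
            rw [hT] at hn0
            intro h; exact (List.nodup_cons.mp hn0).1 (h ▸ List.mem_cons_self)
          have hvt : v = t := (hall v).resolve_left hvs
          subst hvt
          -- T' must be empty
          cases T' with
          | cons z R =>
              exfalso
              rw [hT, List.getLast?_cons_cons, List.getLast?_cons_cons] at hl0
              have hmem : v ∈ z :: R := mem_of_getLast?_eq hl0
              rw [hT] at hn0
              exact (List.nodup_cons.mp (List.nodup_cons.mp hn0).2).1 hmem
          | nil =>
              refine ⟨P 0, hP 0, fun _ => 0, ?_, ?_⟩
              · intro a ha b hb _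
                rw [hT] at ha hb
                simp only [Set.mem_setOf_eq, pathEdges_cons_cons, pathEdges_singleton,
                  List.mem_cons, List.not_mem_nil, or_false] at ha hb
                rw [ha, hb]
              · intro e he
                exact he
  | succ n IH =>
      intro V _ D s t hn P hP
      haveI : DecidableEq V := Classical.decEq V
      by_cases hst : s = t
      · exact rainbow_trivial D hst (n + 1) P
      have ht_s : t ≠ s := fun h => hst h.symm
      obtain ⟨hLc, hLh, hLl, hLn⟩ := hP (Fin.last (n + 1))
      obtain ⟨T0, hT0⟩ := exists_cons_of_head?_eq hLh
      cases T0 with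
      | nil =>
          exfalso
          rw [hT0, List.getLast?_singleton] at hLl
          injection hLl with h
          exact hst h
      | cons u l'' =>
      have hu_s : u ≠ s := by
        rw [hT0] at hLn
        intro h
        exact (List.nodup_cons.mp hLn).1 (h ▸ List.mem_cons_self)
      by_cases hut : u = t
      · -- the last path has the direct edge s → t
        subst hut
        have hDsu : D s u := by
          rw [hT0] at hLc
          exact (List.isChain_cons_cons.mp hLc).1
        refine ⟨[s, u], ⟨?_, rfl, by simp, by simp [Ne.symm hu_s]⟩,
          fun _ => Fin.last (n + 1), ?_, ?_⟩
        · rw [chain'_iff_pathEdges]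
          intro e he
          rw [pathEdges_cons_cons] at he
          simp only [pathEdges_singleton, List.mem_cons, List.not_mem_nil, or_false] at he
          rw [he]
          exact hDsu
        · intro a ha b hb _
          simp only [Set.mem_setOf_eq, pathEdges_cons_cons, pathEdges_singleton,
            List.mem_cons, List.not_mem_nil, or_false] at ha hb
          rw [ha, hb]
        · intro e he
          rw [pathEdges_cons_cons] at he
          simp only [pathEdges_singleton, List.mem_cons, List.not_mem_nil, or_false] at he
          rw [he, hT0, pathEdges_cons_cons]
          exact List.mem_cons_self
      -- main case: u is an inner vertex
      have hu_t : u ≠ t := hut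
      -- inner vertex count of the contracted network
      have hmem_u : u ∈ {v : V | v ≠ s ∧ v ≠ t} := ⟨hu_s, hu_t⟩
      have himg : (Subtype.val '' {v : {v : V // v ≠ s} | v ≠ ⟨u, hu_s⟩ ∧ v ≠ ⟨t, ht_s⟩})
          = {v : V | v ≠ s ∧ v ≠ t} \ {u} := by
        ext v
        constructor
        · rintro ⟨x, ⟨h1, h2⟩, rfl⟩
          exact ⟨⟨x.2, fun h => h2 (Subtype.ext h)⟩, fun h => h1 (Subtype.ext h)⟩
        · rintro ⟨⟨h1, h2⟩, h3⟩
          exact ⟨⟨v, h1⟩, ⟨fun h => h3 (congrArg Subtype.val h),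
            fun h => h2 (congrArg Subtype.val h)⟩, rfl⟩
      have hn' : ({v : {v : V // v ≠ s} | v ≠ ⟨u, hu_s⟩ ∧ v ≠ ⟨t, ht_s⟩}).ncard = n := by
        have h1 := Set.ncard_image_of_injective
          {v : {v : V // v ≠ s} | v ≠ ⟨u, hu_s⟩ ∧ v ≠ ⟨t, ht_s⟩}
          (Subtype.val_injective (p := fun v => v ≠ s))
        rw [himg, Set.ncard_diff_singleton_of_mem hmem_u, hn] at h1
        omega
      -- the contracted paths
      have hR : ∀ i : Fin (n + 1), ∃ R : List {v : V // v ≠ s},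
          IsSTPath (fun x y => D x.1 y.1 ∨ (x.1 = u ∧ D s y.1))
            (⟨u, hu_s⟩ : {v : V // v ≠ s}) ⟨t, ht_s⟩ R ∧
          ∀ e ∈ pathEdges R, ((e.1.1, e.2.1) ∈ pathEdges (P i.castSucc) ∨
            (e.1 = ⟨u, hu_s⟩ ∧ (s, e.2.1) ∈ pathEdges (P i.castSucc))) := by
        intro i
        obtain ⟨hpc, hph, hpl, hpn⟩ := hP i.castSucc
        obtain ⟨p', hp'⟩ := exists_cons_of_head?_eq hph
        have hsp' : s ∉ p' := by rw [hp'] at hpn; exact (List.nodup_cons.mp hpn).1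
        have hbuild : ∀ core : List V, core <:+ P i.castSucc →
            (core.head? = some s ∨ core.head? = some u) →
            (∀ y ∈ core.tail, y ≠ s) →
            (core.map (embAux hu_s)).Nodup →
            ∃ R : List {v : V // v ≠ s},
              IsSTPath (fun x y => D x.1 y.1 ∨ (x.1 = u ∧ D s y.1))
                (⟨u, hu_s⟩ : {v : V // v ≠ s}) ⟨t, ht_s⟩ R ∧
              ∀ e ∈ pathEdges R, ((e.1.1, e.2.1) ∈ pathEdges (P i.castSucc) ∨
                (e.1 = ⟨u, hu_s⟩ ∧ (s, e.2.1) ∈ pathEdges (P i.castSucc))) := by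
          intro core hsuf hhead htail hnd
          have hcne : core ≠ [] := by
            rcases hhead with h | h <;> (intro hc; rw [hc] at h; simp at h)
          have hedge : ∀ e ∈ pathEdges (core.map (embAux hu_s)),
              ((D e.1.1 e.2.1 ∨ (e.1.1 = u ∧ D s e.2.1)) ∧
               ((e.1.1, e.2.1) ∈ pathEdges (P i.castSucc) ∨
                (e.1 = ⟨u, hu_s⟩ ∧ (s, e.2.1) ∈ pathEdges (P i.castSucc)))) := by
            intro e he
            rw [pathEdges_map] at he
            obtain ⟨⟨x, y⟩, hxy, rfl⟩ := List.mem_map.mp he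
            have hxyp : (x, y) ∈ pathEdges (P i.castSucc) :=
              hsuf.pathEdges'.sublist.subset hxy
            have hy : y ≠ s := htail y (mem_of_mem_pathEdges hxy).2
            have hD : D x y := (chain'_iff_pathEdges D _).mp hpc _ hxyp
            by_cases hx : x = s
            · refine ⟨Or.inr ⟨?_, ?_⟩, Or.inr ⟨?_, ?_⟩⟩
              · show (embAux hu_s x).1 = u
                rw [hx, embAux_self]
              · show D s (embAux hu_s y).1
                rw [embAux_of_ne hu_s hy]
                rw [hx] at hD
                exact hD
              · show embAux hu_s x = ⟨u, hu_s⟩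
                rw [hx, embAux_self]
              · show (s, (embAux hu_s y).1) ∈ pathEdges (P i.castSucc)
                rw [embAux_of_ne hu_s hy]
                rw [hx] at hxyp
                exact hxyp
            · refine ⟨Or.inl ?_, Or.inl ?_⟩
              · show D (embAux hu_s x).1 (embAux hu_s y).1
                rw [embAux_of_ne hu_s hx, embAux_of_ne hu_s hy]
                exact hD
              · show ((embAux hu_s x).1, (embAux hu_s y).1) ∈ pathEdges (P i.castSucc)
                rw [embAux_of_ne hu_s hx, embAux_of_ne hu_s hy]
                exact hxyp
          refine ⟨core.map (embAux hu_s), ⟨?_, ?_, ?_, hnd⟩, fun e he => (hedge e he).2⟩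
          · exact (chain'_iff_pathEdges _ _).mpr (fun e he => (hedge e he).1)
          · rw [List.head?_map]
            rcases hhead with h | h <;> rw [h]
            · show some (embAux hu_s s) = _
              rw [embAux_self]
            · show some (embAux hu_s u) = _
              rw [embAux_of_ne hu_s hu_s]
          · have hcl : core.getLast? = some t := by
              rw [← hsuf.getLast?_eq hcne]
              exact hpl
            rw [List.getLast?_map, hcl]
            show some (embAux hu_s t) = _
            rw [embAux_of_ne hu_s ht_s]
        by_cases hu_p : u ∈ P i.castSucc
        · obtain ⟨a, b, hab⟩ := List.append_of_mem hu_p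
          have hsuf : u :: b <:+ P i.castSucc := ⟨a, hab.symm⟩
          have hub_ne : ∀ x ∈ u :: b, x ≠ s := by
            cases a with
            | nil =>
                exfalso
                rw [hp'] at hab
                injection hab with h1 _
                exact hu_s h1.symm
            | cons z a' =>
                rw [hp'] at hab
                injection hab with h1 h2
                intro x hx
                rcases List.mem_cons.mp hx with rfl | hx
                · exact hu_s
                · intro h
                  exact hsp' (h ▸ (h2 ▸ List.mem_append_right a'
                      (List.mem_cons_of_mem u hx)))
          refine hbuild (u :: b) hsuf (Or.inr rfl) (fun y hy => hub_ne y
            (List.mem_cons_of_mem u hy)) ?_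
          refine List.Nodup.map_on ?_ (List.Nodup.sublist hsuf.sublist hpn)
          intro x hx y hy h
          rw [embAux_of_ne hu_s (hub_ne x hx), embAux_of_ne hu_s (hub_ne y hy)] at h
          exact congrArg Subtype.val h
        · refine hbuild (P i.castSucc) (List.suffix_refl _) (Or.inl hph) ?_ ?_
          · intro y hy
            rw [hp'] at hy
            exact fun h => hsp' (h ▸ hy)
          · refine List.Nodup.map_on ?_ hpn
            intro x hx y hy h
            by_cases hxs : x = s <;> by_cases hys : y = s
            · rw [hxs, hys]
            · exfalso
              rw [hxs, embAux_self, embAux_of_ne hu_s hys] at h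
              have hyu : y = u := (congrArg Subtype.val h).symm
              exact hu_p (hyu ▸ hy)
            · exfalso
              rw [hys, embAux_self, embAux_of_ne hu_s hxs] at h
              have hxu : x = u := congrArg Subtype.val h
              exact hu_p (hxu ▸ hx)
            · rw [embAux_of_ne hu_s hxs, embAux_of_ne hu_s hys] at h
              exact congrArg Subtype.val h
      choose R hR1 hR2 using hR
      haveI : Fintype {v : V // v ≠ s} := Fintype.ofFinite _
      obtain ⟨Q', hQ'st, c', hc'inj, hc'mem⟩ :=
        IH (fun x y => D x.1 y.1 ∨ (x.1 = u ∧ D s y.1))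
          (⟨u, hu_s⟩ : {v : V // v ≠ s}) ⟨t, ht_s⟩ hn' R hR1
      obtain ⟨hQ'c, hQ'h, hQ'l, hQ'n⟩ := hQ'st
      obtain ⟨T1, hQ1⟩ := exists_cons_of_head?_eq hQ'h
      cases T1 with
      | nil =>
          exfalso
          rw [hQ1, List.getLast?_singleton] at hQ'l
          injection hQ'l with h
          exact hu_t (congrArg Subtype.val h)
      | cons w T' =>
      subst hQ1
      rw [List.getLast?_cons_cons] at hQ'l
      have hs'T : (⟨u, hu_s⟩ : {v : V // v ≠ s}) ∉ w :: T' :=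
        (List.nodup_cons.mp hQ'n).1
      have hwT'n : (w :: T').Nodup := (List.nodup_cons.mp hQ'n).2
      have hQ'E : pathEdges ((⟨u, hu_s⟩ : {v : V // v ≠ s}) :: w :: T')
          = ((⟨u, hu_s⟩ : {v : V // v ≠ s}), w) :: pathEdges (w :: T') :=
        pathEdges_cons_cons _ _ _
      have hclass : ∀ e ∈ pathEdges ((⟨u, hu_s⟩ : {v : V // v ≠ s}) :: w :: T'),
          e = (⟨u, hu_s⟩, w) ∨ (e ∈ pathEdges (w :: T') ∧ e.1 ≠ ⟨u, hu_s⟩) := by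
        intro e he
        rcases pathEdges_cons_elim he with h | ⟨y, T, hyT, rfl⟩
        · exact Or.inr ⟨h, fun hx => hs'T (hx ▸ (mem_of_mem_pathEdges h).1)⟩
        · injection hyT with h1 _
          rw [h1]
          exact Or.inl rfl
      have he₀ : ((⟨u, hu_s⟩ : {v : V // v ≠ s}), w)
          ∈ pathEdges ((⟨u, hu_s⟩ : {v : V // v ≠ s}) :: w :: T') := by
        rw [hQ'E]
        exact List.mem_cons_self
      have hd := hR2 (c' (⟨u, hu_s⟩, w)) (⟨u, hu_s⟩, w) (hc'mem _ he₀)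
      rcases hd with hg | ⟨-, hv⟩
      · -- GENUINE case : edge (u, w) appears in path P (c' (s', w)).castSucc
        have hQE : pathEdges (s :: u :: (w :: T').map Subtype.val)
            = (s, u) :: (pathEdges ((⟨u, hu_s⟩ : {v : V // v ≠ s}) :: w :: T')).map
                (Prod.map Subtype.val Subtype.val) := by
          rw [pathEdges_cons_cons, ← pathEdges_map]
          rfl
        have hcB : ∀ x y : {v : V // v ≠ s},
            (fun e : V × V => if e.1 = s then Fin.last (n + 1) else (c' (embAux hu_s e.1, embAux hu_s e.2)).castSucc) (x.1, y.1) = (c' (x, y)).castSucc := by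
          intro x y
          show (if (x.1 : V) = s then Fin.last (n + 1)
            else (c' (embAux hu_s x.1, embAux hu_s y.1)).castSucc) = (c' (x, y)).castSucc
          rw [if_neg x.2, embAux_coe hu_s x, embAux_coe hu_s y]
        have hmemg : ∀ e ∈ pathEdges (s :: u :: (w :: T').map Subtype.val),
            e ∈ pathEdges (P (if e.1 = s then Fin.last (n + 1)
              else (c' (embAux hu_s e.1, embAux hu_s e.2)).castSucc)) := by
          intro e he
          rw [hQE] at he
          rcases List.mem_cons.mp he with rfl | he
          · rw [if_pos (show ((s, u) : V × V).1 = s from rfl)]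
            rw [hT0, pathEdges_cons_cons]
            exact List.mem_cons_self
          · obtain ⟨⟨x, y⟩, hxy, rfl⟩ := List.mem_map.mp he
            show (x.1, y.1) ∈ pathEdges (P (if (x.1 : V) = s then Fin.last (n + 1)
              else (c' (embAux hu_s x.1, embAux hu_s y.1)).castSucc))
            rw [if_neg x.2, embAux_coe hu_s x, embAux_coe hu_s y]
            rcases hR2 (c' (x, y)) (x, y) (hc'mem _ hxy) with h | ⟨hx1, h⟩
            · exact h
            · rcases hclass (x, y) hxy with heq | ⟨_, hne⟩
              · injection heq with e1 e2
                subst e1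
                subst e2
                exact hg
              · exact absurd hx1 hne
        refine ⟨s :: u :: (w :: T').map Subtype.val, ⟨?_, rfl, ?_, ?_⟩,
          (fun e : V × V => if e.1 = s then Fin.last (n + 1) else (c' (embAux hu_s e.1, embAux hu_s e.2)).castSucc), ?_, hmemg⟩
        · exact (chain'_iff_pathEdges D _).mpr
            (fun e he => ((chain'_iff_pathEdges D _).mp (hP _).1) e (hmemg e he))
        · show (s :: u :: w.1 :: T'.map Subtype.val).getLast? = some t
          rw [List.getLast?_cons_cons, List.getLast?_cons_cons,
            show (w.1 :: T'.map Subtype.val) = (w :: T').map Subtype.val from rfl,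
            List.getLast?_map, hQ'l]
          rfl
        · rw [List.nodup_cons]
          constructor
          · intro h
            rcases List.mem_cons.mp h with h | h
            · exact hu_s h.symm
            · obtain ⟨x, _, hx⟩ := List.mem_map.mp h
              exact x.2 hx
          · show (((⟨u, hu_s⟩ : {v : V // v ≠ s}) :: w :: T').map Subtype.val).Nodup
            exact hQ'n.map Subtype.val_injective
        · intro a ha b hb hab
          simp only [Set.mem_setOf_eq] at ha hb
          rw [hQE] at ha hb
          rcases List.mem_cons.mp ha with rfl | ha <;> rcases List.mem_cons.mp hb with rfl | hb
          · rfl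
          · exfalso
            obtain ⟨⟨x, y⟩, hxy, rfl⟩ := List.mem_map.mp hb
            have h1 : (fun e : V × V => if e.1 = s then Fin.last (n + 1) else (c' (embAux hu_s e.1, embAux hu_s e.2)).castSucc) (s, u) = Fin.last (n + 1) := if_pos rfl
            have h2 : (fun e : V × V => if e.1 = s then Fin.last (n + 1) else (c' (embAux hu_s e.1, embAux hu_s e.2)).castSucc) (Prod.map Subtype.val Subtype.val (x, y))
                = (c' (x, y)).castSucc := hcB x y
            rw [h1, h2] at hab
            exact (Fin.castSucc_lt_last (c' (x, y))).ne hab.symm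
          · exfalso
            obtain ⟨⟨x, y⟩, hxy, rfl⟩ := List.mem_map.mp ha
            have h1 : (fun e : V × V => if e.1 = s then Fin.last (n + 1) else (c' (embAux hu_s e.1, embAux hu_s e.2)).castSucc) (s, u) = Fin.last (n + 1) := if_pos rfl
            have h2 : (fun e : V × V => if e.1 = s then Fin.last (n + 1) else (c' (embAux hu_s e.1, embAux hu_s e.2)).castSucc) (Prod.map Subtype.val Subtype.val (x, y))
                = (c' (x, y)).castSucc := hcB x y
            rw [h1, h2] at hab
            exact (Fin.castSucc_lt_last (c' (x, y))).ne hab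
          · obtain ⟨⟨x1, y1⟩, hxy1, rfl⟩ := List.mem_map.mp ha
            obtain ⟨⟨x2, y2⟩, hxy2, rfl⟩ := List.mem_map.mp hb
            have h1 : (fun e : V × V => if e.1 = s then Fin.last (n + 1) else (c' (embAux hu_s e.1, embAux hu_s e.2)).castSucc) (Prod.map Subtype.val Subtype.val (x1, y1))
                = (c' (x1, y1)).castSucc := hcB x1 y1
            have h2 : (fun e : V × V => if e.1 = s then Fin.last (n + 1) else (c' (embAux hu_s e.1, embAux hu_s e.2)).castSucc) (Prod.map Subtype.val Subtype.val (x2, y2))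
                = (c' (x2, y2)).castSucc := hcB x2 y2
            rw [h1, h2] at hab
            exact congrArg (Prod.map Subtype.val Subtype.val)
              (hc'inj hxy1 hxy2 (Fin.castSucc_injective _ hab))
      · -- VIRTUAL case : edge (s, w) appears in path P (c' (s', w)).castSucc
        have hQEv : pathEdges (s :: w.1 :: T'.map Subtype.val)
            = (s, w.1) :: (pathEdges (w :: T')).map (Prod.map Subtype.val Subtype.val) := by
          rw [pathEdges_cons_cons, ← pathEdges_map]
          rfl
        have hcvA : (fun e : V × V => (c' (embAux hu_s e.1, embAux hu_s e.2)).castSucc) (s, w.1) = (c' (⟨u, hu_s⟩, w)).castSucc := by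
          show (c' (embAux hu_s s, embAux hu_s w.1)).castSucc = _
          rw [embAux_self, embAux_coe hu_s w]
        have hcvB : ∀ x y : {v : V // v ≠ s},
            (fun e : V × V => (c' (embAux hu_s e.1, embAux hu_s e.2)).castSucc) (x.1, y.1) = (c' (x, y)).castSucc := by
          intro x y
          show (c' (embAux hu_s x.1, embAux hu_s y.1)).castSucc = (c' (x, y)).castSucc
          rw [embAux_coe hu_s x, embAux_coe hu_s y]
        have hmemv : ∀ e ∈ pathEdges (s :: w.1 :: T'.map Subtype.val),
            e ∈ pathEdges (P ((c' (embAux hu_s e.1, embAux hu_s e.2)).castSucc)) := by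
          intro e he
          rw [hQEv] at he
          rcases List.mem_cons.mp he with rfl | he
          · show (s, w.1) ∈ pathEdges (P ((c' (embAux hu_s s, embAux hu_s w.1)).castSucc))
            rw [embAux_self, embAux_coe hu_s w]
            exact hv
          · obtain ⟨⟨x, y⟩, hxy, rfl⟩ := List.mem_map.mp he
            have hxyQ' : (x, y) ∈ pathEdges ((⟨u, hu_s⟩ : {v : V // v ≠ s}) :: w :: T') := by
              rw [hQ'E]
              exact List.mem_cons_of_mem _ hxy
            have hxs' : x ≠ ⟨u, hu_s⟩ := fun h => hs'T (h ▸ (mem_of_mem_pathEdges hxy).1)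
            show (x.1, y.1) ∈ pathEdges (P ((c' (embAux hu_s x.1, embAux hu_s y.1)).castSucc))
            rw [embAux_coe hu_s x, embAux_coe hu_s y]
            rcases hR2 (c' (x, y)) (x, y) (hc'mem _ hxyQ') with h | ⟨hx1, _⟩
            · exact h
            · exact absurd hx1 hxs'
        refine ⟨s :: w.1 :: T'.map Subtype.val, ⟨?_, rfl, ?_, ?_⟩,
          (fun e : V × V => (c' (embAux hu_s e.1, embAux hu_s e.2)).castSucc), ?_, hmemv⟩
        · exact (chain'_iff_pathEdges D _).mpr
            (fun e he => ((chain'_iff_pathEdges D _).mp (hP _).1) e (hmemv e he))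
        · rw [List.getLast?_cons_cons,
            show (w.1 :: T'.map Subtype.val) = (w :: T').map Subtype.val from rfl,
            List.getLast?_map, hQ'l]
          rfl
        · rw [List.nodup_cons]
          constructor
          · intro h
            have h' : s ∈ (w :: T').map Subtype.val := h
            obtain ⟨x, _, hx⟩ := List.mem_map.mp h'
            exact x.2 hx
          · show ((w :: T').map Subtype.val).Nodup
            exact hwT'n.map Subtype.val_injective
        · intro a ha b hb hab
          simp only [Set.mem_setOf_eq] at ha hb
          rw [hQEv] at ha hb
          rcases List.mem_cons.mp ha with rfl | ha <;> rcases List.mem_cons.mp hb with rfl | hb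
          · rfl
          · exfalso
            obtain ⟨⟨x, y⟩, hxy, rfl⟩ := List.mem_map.mp hb
            have hxyQ' : (x, y) ∈ pathEdges ((⟨u, hu_s⟩ : {v : V // v ≠ s}) :: w :: T') := by
              rw [hQ'E]
              exact List.mem_cons_of_mem _ hxy
            have hxs' : x ≠ ⟨u, hu_s⟩ := fun h => hs'T (h ▸ (mem_of_mem_pathEdges hxy).1)
            have h2 : (fun e : V × V => (c' (embAux hu_s e.1, embAux hu_s e.2)).castSucc) (Prod.map Subtype.val Subtype.val (x, y))
                = (c' (x, y)).castSucc := hcvB x y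
            rw [hcvA, h2] at hab
            have h4 := hc'inj he₀ hxyQ' (Fin.castSucc_injective _ hab)
            injection h4 with e1 _
            exact hxs' e1.symm
          · exfalso
            obtain ⟨⟨x, y⟩, hxy, rfl⟩ := List.mem_map.mp ha
            have hxyQ' : (x, y) ∈ pathEdges ((⟨u, hu_s⟩ : {v : V // v ≠ s}) :: w :: T') := by
              rw [hQ'E]
              exact List.mem_cons_of_mem _ hxy
            have hxs' : x ≠ ⟨u, hu_s⟩ := fun h => hs'T (h ▸ (mem_of_mem_pathEdges hxy).1)
            have h2 : (fun e : V × V => (c' (embAux hu_s e.1, embAux hu_s e.2)).castSucc) (Prod.map Subtype.val Subtype.val (x, y))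
                = (c' (x, y)).castSucc := hcvB x y
            rw [hcvA, h2] at hab
            have h4 := hc'inj he₀ hxyQ' (Fin.castSucc_injective _ hab.symm)
            injection h4 with e1 _
            exact hxs' e1.symm
          · obtain ⟨⟨x1, y1⟩, hxy1, rfl⟩ := List.mem_map.mp ha
            obtain ⟨⟨x2, y2⟩, hxy2, rfl⟩ := List.mem_map.mp hb
            have hxyQ1 : (x1, y1) ∈ pathEdges ((⟨u, hu_s⟩ : {v : V // v ≠ s}) :: w :: T') := by
              rw [hQ'E]
              exact List.mem_cons_of_mem _ hxy1
            have hxyQ2 : (x2, y2) ∈ pathEdges ((⟨u, hu_s⟩ : {v : V // v ≠ s}) :: w :: T') := by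
              rw [hQ'E]
              exact List.mem_cons_of_mem _ hxy2
            have h1 : (fun e : V × V => (c' (embAux hu_s e.1, embAux hu_s e.2)).castSucc) (Prod.map Subtype.val Subtype.val (x1, y1))
                = (c' (x1, y1)).castSucc := hcvB x1 y1
            have h2 : (fun e : V × V => (c' (embAux hu_s e.1, embAux hu_s e.2)).castSucc) (Prod.map Subtype.val Subtype.val (x2, y2))
                = (c' (x2, y2)).castSucc := hcvB x2 y2
            rw [h1, h2] at hab
            exact congrArg (Prod.map Subtype.val Subtype.val)
              (hc'inj hxyQ1 hxyQ2 (Fin.castSucc_injective _ hab))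

/-- In a network with `n` inner vertices, any `n+1` directed `s`–`t` paths have
a rainbow `s`–`t` path. -/
theorem rainbow_path {V : Type*} [Fintype V] (D : V → V → Prop) (s t : V)
    (hs : ∀ v, ¬ D v s) (ht : ∀ v, ¬ D t v) {n : ℕ}
    (hn : ({v : V | v ≠ s ∧ v ≠ t}).ncard = n)
    (P : Fin (n + 1) → List V) (hP : ∀ i, IsSTPath D s t (P i)) :
    ∃ Q : List V, IsSTPath D s t Q ∧
      ∃ c : V × V → Fin (n + 1),
        Set.InjOn c {e | e ∈ pathEdges Q} ∧
        ∀ e ∈ pathEdges Q, e ∈ pathEdges (P (c e)) := by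
  exact rainbow_aux n D s t hn P hP
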